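/- For any infinite set A, there exists a family S of subsets of A with |S| = 2^|A| such that S is independent: whenever s₁,…,sₘ,t₁,…,tₙ ∈ S are distinct, the set (A \ s₁) ∪ … ∪ (A \ sₘ) ∪ t₁ ∪ … ∪ tₙ is not equal to A (equivalently, s₁ ∩ … ∩ sₘ ∩ (A\t₁) ∩ … ∩ (A\tₙ) is nonempty). -/

import Mathlib

open Classical in
/-- Hausdorff: every infinite set carries an independent family of subsets of
maximal cardinality `2^|A|`. Independence modulo the trivial filter `{A}`:
for finitely many distinct `s₁,…,sₘ,t₁,…,tₙ` in the family, the union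
`s₁ᶜ ∪ … ∪ sₘᶜ ∪ t₁ ∪ … ∪ tₙ` is not all of `A`. -/
theorem stmt_0 (α : Type*) [Infinite α] :
    ∃ S : Set (Set α), Cardinal.mk S = 2 ^ Cardinal.mk α ∧
      ∀ P Q : Finset (Set α), (↑P : Set (Set α)) ⊆ S → (↑Q : Set (Set α)) ⊆ S →
        Disjoint P Q →
        ((⋃ x ∈ P, xᶜ) ∪ ⋃ y ∈ Q, (y : Set α)) ≠ Set.univ := by
  classical
  -- the index type B with |B| = |α|
  set B := Finset α × Finset (Finset α) with hB
  have hcard : Cardinal.mk B = Cardinal.mk α := by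
    rw [hB, Cardinal.mk_prod, Cardinal.mk_finset_of_infinite,
      Cardinal.mk_finset_of_infinite]
    simp [Cardinal.mul_eq_self (Cardinal.aleph0_le_mk α)]
  obtain ⟨e⟩ := Cardinal.eq.mp hcard
  -- the condition
  set cond : Set α → B → Prop := fun X b => b.1.filter (· ∈ X) ∈ b.2 with hcond
  set f : Set α → Set α := fun X => e '' {b | cond X b} with hf
  -- key combinatorial lemma
  have key : ∀ P' Q' : Finset (Set α), Disjoint P' Q' →
      ∃ b : B, (∀ X ∈ P', cond X b) ∧ (∀ Y ∈ Q', ¬ cond Y b) := by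
    intro P' Q' hdisj
    -- for each pair (X, Y) with X ∈ P', Y ∈ Q', pick a separating point
    have hsep : ∀ X ∈ P', ∀ Y ∈ Q', ∃ a : α, (a ∈ X) ≠ (a ∈ Y) := by
      intro X hX Y hY
      have hne : X ≠ Y := fun h => (Finset.disjoint_left.mp hdisj hX) (h ▸ hY)
      by_contra h
      push_neg at h
      exact hne (Set.ext fun a => by simpa using eq_iff_iff.mp (h a))
    choose! g hg using hsep
    set F : Finset α := P'.biUnion (fun X => Q'.image (fun Y => g X Y)) with hF
    set G : Finset (Finset α) := P'.image (fun X => F.filter (· ∈ X)) with hG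
    refine ⟨(F, G), ?_, ?_⟩
    · intro X hX
      exact Finset.mem_image_of_mem _ hX
    · intro Y hY hc
      simp only [hcond, hG, Finset.mem_image] at hc
      obtain ⟨X, hX, hXY⟩ := hc
      have haF : g X Y ∈ F := Finset.mem_biUnion.mpr
        ⟨X, hX, Finset.mem_image_of_mem _ hY⟩
      have := hg X hX Y hY
      have h1 : g X Y ∈ F.filter (· ∈ X) ↔ g X Y ∈ F.filter (· ∈ Y) := by
        rw [hXY]
      simp only [Finset.mem_filter, haF, true_and] at h1
      exact this (eq_iff_iff.mpr h1)
  -- f is injective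
  have hfi : Function.Injective f := by
    intro X Y hXY
    by_contra hne
    obtain ⟨b, h1, h2⟩ := key {X} {Y} (by simp [Ne.symm hne, hne])
    have hb : cond X b := h1 X (by simp)
    have hb' : ¬ cond Y b := h2 Y (by simp)
    exact hb' (by
      have : e b ∈ f X := ⟨b, hb, rfl⟩
      rw [hXY] at this
      obtain ⟨b', hb', heb⟩ := this
      rwa [← e.injective heb])
  refine ⟨Set.range f, ?_, ?_⟩
  · rw [Cardinal.mk_range_eq f hfi, Cardinal.mk_set]
  · intro P Q hP hQ hdisj habs
    set P' : Finset (Set α) := P.preimage f hfi.injOn with hP'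
    set Q' : Finset (Set α) := Q.preimage f hfi.injOn with hQ'
    have hdisj' : Disjoint P' Q' := by
      rw [Finset.disjoint_left]
      intro X hX hX'
      rw [hP', Finset.mem_preimage] at hX
      rw [hQ', Finset.mem_preimage] at hX'
      exact Finset.disjoint_left.mp hdisj hX hX'
    obtain ⟨b, h1, h2⟩ := key P' Q' hdisj'
    have : e b ∈ ((⋃ x ∈ P, xᶜ) ∪ ⋃ y ∈ Q, (y : Set α)) := habs ▸ Set.mem_univ _
    rcases this with h | h
    · obtain ⟨x, hx, hxc⟩ := Set.mem_iUnion₂.mp h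
      obtain ⟨X, rfl⟩ := hP hx
      have hXP' : X ∈ P' := by rw [hP', Finset.mem_preimage]; exact hx
      exact hxc ⟨b, h1 X hXP', rfl⟩
    · obtain ⟨y, hy, hyc⟩ := Set.mem_iUnion₂.mp h
      obtain ⟨Y, rfl⟩ := hQ hy
      have hYQ' : Y ∈ Q' := by rw [hQ', Finset.mem_preimage]; exact hy
      obtain ⟨b', hb', heb⟩ := hyc
      exact h2 Y hYQ' (by rwa [← e.injective heb])
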